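/- Let σ be the anti-involution of the free superalgebra 'f fixing each generator θ_i, and let ᵗr be the composition of r with the (unsigned) flip x⊗y ↦ y⊗x. Then for all x ∈ 'f, r(σ(x)) = (σ⊗σ)(ᵗr(x)). Consequently, the bilinear form on 'f satisfies (σ(x), σ(x')) = (x, x') for all x, x'. -/

import Mathlib

/- The ring `Aq = ℚ(q)[π]/(π²-1) ≅ ℚ(q) × ℚ(q)` (via π ↦ (1, -1), an isomorphism
since 2 is invertible).  Division/inversion is componentwise (the total fraction ring). -/
noncomputable section

abbrev Aq : Type := RatFunc ℚ × RatFunc ℚ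

/-- the element `q` -/
def qA : Aq := (RatFunc.X, RatFunc.X)

/-- the element `π`, satisfying `π² = 1` -/
def pA : Aq := (1, -1)

/-- The `(q,π)`-binomial coefficient
`[[a;t]] = (∏_{s=0}^{t-1} ((πq)^{a-s} - q^{s-a})) / (∏_{s=1}^{t} ((πq)^s - q^{-s}))`. -/
def qbinom (a : ℤ) (t : ℕ) : Aq :=
  (∏ s ∈ Finset.range t, ((pA * qA) ^ (a - (s : ℤ)) - qA ^ ((s : ℤ) - a))) /
  (∏ s ∈ Finset.range t, ((pA * qA) ^ ((s : ℤ) + 1) - qA ^ (-((s : ℤ) + 1))))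


/-- A super Cartan datum: `I = I₀ ⊔ I₁` (parity `p : I → {0,1}`), symmetric form `Bf`,
with `Bf i i = 2 d i > 0`, `⟨i,j'⟩ = aij i j = 2(i·j)/(i·i) ∈ -ℕ` for `i ≠ j`,
even for odd `i`, and `I₁ ≠ ∅`. -/
structure SCD (I : Type) (Bf : I → I → ℤ) (p d : I → ℕ) (aij : I → I → ℤ) : Prop where
  symm : ∀ i j, Bf i j = Bf j i
  diag : ∀ i, Bf i i = 2 * (d i : ℤ)
  dpos : ∀ i, 0 < d i
  div : ∀ i j, (d i : ℤ) * aij i j = Bf i j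
  offdiag : ∀ i j, i ≠ j → aij i j ≤ 0
  par_le : ∀ i, p i ≤ 1
  odd_even : ∀ i j, p i = 1 → Even (aij i j)
  odd_nonempty : ∃ i, p i = 1

/-- the pairing `|w|·|w'|` of the weights of two words -/
def wtB {I : Type} (Bf : I → I → ℤ) (w w' : FreeMonoid I) : ℤ :=
  ((FreeMonoid.toList w).map fun i =>
    ((FreeMonoid.toList w').map fun j => Bf i j).sum).sum

/-- the parity `p(w)` of a word -/
def par {I : Type} (p : I → ℕ) (w : FreeMonoid I) : ℕ :=
  ((FreeMonoid.toList w).map p).sum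

/-- the twisting factor `q^{|w|·|w'|} π^{p(w)p(w')}` -/
def tw {I : Type} (Bf : I → I → ℤ) (p : I → ℕ) (w w' : FreeMonoid I) : Aq :=
  qA ^ wtB Bf w w' * pA ^ (par p w * par p w')

/-- the free associative superalgebra `'f` on generators `θ_i`, realized as the monoid
algebra of the free monoid on `I` (so the words are the standard homogeneous basis) -/
abbrev FF (I : Type) : Type := MonoidAlgebra Aq (FreeMonoid I)

/-- the basis element of `'f` corresponding to a word `w` -/
def ofW {I : Type} (w : FreeMonoid I) : FF I := MonoidAlgebra.of Aq (FreeMonoid I) w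

/-- the generator `θ_i` -/
def th {I : Type} (i : I) : FF I := ofW (FreeMonoid.of i)

/-- `q_i = q^{i·i/2}` -/
def qi {I : Type} (d : I → ℕ) (i : I) : Aq := qA ^ d i

/-- `π_i = π^{p(i)}` -/
def pi' {I : Type} (p : I → ℕ) (i : I) : Aq := pA ^ p i

/-- `[m]_i = ((π_i q_i)^m - q_i^{-m})/(π_i q_i - q_i^{-1})` -/
def qinti {I : Type} (p d : I → ℕ) (i : I) (m : ℕ) : Aq :=
  ((pi' p i * qi d i) ^ m - qi d i ^ (-(m : ℤ))) / (pi' p i * qi d i - (qi d i)⁻¹)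

/-- `[m]_i! = ∏_{s=1}^m [s]_i` -/
def qfacti {I : Type} (p d : I → ℕ) (i : I) (m : ℕ) : Aq :=
  ∏ s ∈ Finset.range m, qinti p d i (s + 1)

/-- the divided power `θ_i^{(n)} = θ_i^n/[n]_i!` -/
def thpow {I : Type} (p d : I → ℕ) (i : I) (n : ℕ) : FF I :=
  (qfacti p d i n)⁻¹ • th i ^ n

/-- The defining properties of the bilinear form `(·,·)` on `'f`:
`(1,1)=1`, `(θ_i,θ_j) = δ_{ij}(1-π_i q_i^{-2})^{-1}`, `(x, y'y'') = (r(x), y'⊗y'')` and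
`(xx', y'') = (x⊗x', r(y''))`, where the form on the twisted tensor square `T2` is
`(x₁⊗x₂, x₁'⊗x₂') = (x₁,x₁')(x₂,x₂')` (expressed by expanding along the basis `b2`). -/
structure FormProps (I : Type) [DecidableEq I] (Bf : I → I → ℤ) (p d : I → ℕ)
    (T2 : Type) [Ring T2] [Algebra Aq T2]
    (b2 : Module.Basis (FreeMonoid I × FreeMonoid I) Aq T2)
    (r : FF I →ₐ[Aq] T2)
    (B : FF I →ₗ[Aq] FF I →ₗ[Aq] Aq) : Prop where
  one_one : B 1 1 = 1
  gen : ∀ i j, B (th i) (th j) =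
      if i = j then (1 - pi' p i * qi d i ^ (-2 : ℤ))⁻¹ else 0
  mul_right : ∀ x y' y'', B x (y' * y'') =
      (b2.repr (r x)).sum fun pr c => c * B (ofW pr.1) y' * B (ofW pr.2) y''
  mul_left : ∀ x x' y'', B (x * x') y'' =
      (b2.repr (r y'')).sum fun pr c => c * B x (ofW pr.1) * B x' (ofW pr.2)

/-- reversal of a word -/
def revW {I : Type} (w : FreeMonoid I) : FreeMonoid I :=
  FreeMonoid.ofList (FreeMonoid.toList w).reverse

/-- the weight `|w| ∈ ℕ[I]` of a word -/
def wtF {I : Type} (w : FreeMonoid I) : I →₀ ℕ :=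
  ((FreeMonoid.toList w).map fun i => Finsupp.single i 1).sum

section Aux

variable {I : Type}

lemma revW_one : revW (1 : FreeMonoid I) = 1 := rfl

lemma revW_of (i : I) : revW (FreeMonoid.of i) = FreeMonoid.of i := rfl

lemma revW_mul (a b : FreeMonoid I) : revW (a * b) = revW b * revW a := by
  unfold revW
  rw [FreeMonoid.toList_mul, List.reverse_append]
  rfl

lemma revW_revW (a : FreeMonoid I) : revW (revW a) = a := by
  unfold revW
  rw [FreeMonoid.toList_ofList, List.reverse_reverse, FreeMonoid.ofList_toList]

lemma revW_eq_one_iff (a : FreeMonoid I) : revW a = 1 ↔ a = 1 := by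
  constructor
  · intro h
    rw [← revW_revW a, h, revW_one]
  · intro h
    rw [h, revW_one]

lemma par_revW (p : I → ℕ) (w : FreeMonoid I) : par p (revW w) = par p w := by
  unfold par revW
  rw [FreeMonoid.toList_ofList, List.map_reverse, List.sum_reverse]

lemma listwt_symm (Bf : I → I → ℤ) (hs : ∀ i j, Bf i j = Bf j i) :
    ∀ la lb : List I,
      (la.map fun i => (lb.map fun j => Bf i j).sum).sum
        = (lb.map fun i => (la.map fun j => Bf i j).sum).sum := by
  intro la
  induction la with
  | nil => intro lb; simp
  | cons i la ih =>
      intro lb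
      rw [List.map_cons, List.sum_cons, ih lb]
      have h1 : (lb.map fun i' => ((i :: la).map fun j => Bf i' j).sum)
          = lb.map fun i' => Bf i' i + (la.map fun j => Bf i' j).sum := by
        simp
      rw [h1, List.sum_map_add]
      congr 1
      exact congrArg List.sum (List.map_congr_left fun a _ => hs i a)

lemma wtB_symm (Bf : I → I → ℤ) (hs : ∀ i j, Bf i j = Bf j i) (a b : FreeMonoid I) :
    wtB Bf a b = wtB Bf b a :=
  listwt_symm Bf hs _ _

lemma wtB_rev_left (Bf : I → I → ℤ) (a b : FreeMonoid I) :
    wtB Bf (revW a) b = wtB Bf a b := by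
  unfold wtB revW
  rw [FreeMonoid.toList_ofList, List.map_reverse, List.sum_reverse]

lemma wtB_rev_right (Bf : I → I → ℤ) (a b : FreeMonoid I) :
    wtB Bf a (revW b) = wtB Bf a b := by
  unfold wtB revW
  rw [FreeMonoid.toList_ofList]
  congr 1
  apply List.map_congr_left
  intro i _
  rw [List.map_reverse, List.sum_reverse]

lemma tw_rev (Bf : I → I → ℤ) (p : I → ℕ) (hs : ∀ i j, Bf i j = Bf j i)
    (a b : FreeMonoid I) : tw Bf p a b = tw Bf p (revW b) (revW a) := by
  unfold tw
  rw [wtB_rev_left, wtB_rev_right, wtB_symm Bf hs, par_revW, par_revW, Nat.mul_comm]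

lemma ofW_one : (ofW (1 : FreeMonoid I) : FF I) = 1 :=
  map_one (MonoidAlgebra.of Aq (FreeMonoid I))

lemma ofW_mul (a b : FreeMonoid I) : (ofW (a * b) : FF I) = ofW a * ofW b :=
  map_mul (MonoidAlgebra.of Aq (FreeMonoid I)) a b

lemma of_mul_ne_one (i : I) (v : FreeMonoid I) : FreeMonoid.of i * v ≠ 1 := by
  intro h
  have := congrArg FreeMonoid.toList h
  simp [FreeMonoid.toList_mul, FreeMonoid.toList_of, FreeMonoid.toList_one] at this

end Aux

set_option maxHeartbeats 1000000
set_option synthInstance.maxHeartbeats 400000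

/-- The anti-involution `σ` of `'f` fixing the generators (equivalently, reversing
words) satisfies `r(σ(x)) = (σ⊗σ)(ᵗr(x))`, where `ᵗr` is `r` followed by the unsigned
flip of the twisted tensor square; consequently `(σ(x), σ(x')) = (x, x')`. -/
theorem sigma_coproduct_and_form
    (I : Type) [DecidableEq I] (Bf : I → I → ℤ) (p d : I → ℕ) (aij : I → I → ℤ)
    (hSCD : SCD I Bf p d aij)
    (T2 : Type) [Ring T2] [Algebra Aq T2]
    (b2 : Module.Basis (FreeMonoid I × FreeMonoid I) Aq T2)
    (hone : b2 (1, 1) = 1)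
    (hmul : ∀ w1 w2 w1' w2', b2 (w1, w2) * b2 (w1', w2')
        = tw Bf p w2 w1' • b2 (w1 * w1', w2 * w2'))
    (r : FF I →ₐ[Aq] T2)
    (hr : ∀ i, r (th i) = b2 (FreeMonoid.of i, 1) + b2 (1, FreeMonoid.of i))
    (σ : FF I →ₗ[Aq] FF I)
    (hσ : ∀ w, σ (ofW w) = ofW (revW w))
    (B : FF I →ₗ[Aq] FF I →ₗ[Aq] Aq)
    (hB : FormProps I Bf p d T2 b2 r B) :
    (∀ x : FF I,
      r (σ x) = (b2.constr Aq fun pr => b2 (revW pr.2, revW pr.1)) (r x)) ∧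
    (∀ x x' : FF I, B (σ x) (σ x') = B x x') := by
  classical
  have hBsym := hSCD.symm
  set Φ : T2 →ₗ[Aq] T2 := b2.constr Aq fun pr => b2 (revW pr.2, revW pr.1) with hΦdef
  have hΦb : ∀ pr : FreeMonoid I × FreeMonoid I,
      Φ (b2 pr) = b2 (revW pr.2, revW pr.1) := fun pr =>
    b2.constr_basis Aq _ pr
  have hΦ1 : Φ (1 : T2) = 1 := by
    have h := hΦb (1, 1)
    simp only [revW_one] at h
    rw [← hone, h, hone]
  have hkey : ∀ pr pr' : FreeMonoid I × FreeMonoid I,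
      Φ (b2 pr * b2 pr') = Φ (b2 pr') * Φ (b2 pr) := by
    rintro ⟨w1, w2⟩ ⟨w1', w2'⟩
    rw [hmul, map_smul, hΦb, hΦb, hΦb, hmul]
    simp only
    rw [revW_mul, revW_mul, tw_rev Bf p hBsym]
  have hΦmul : ∀ a b : T2, Φ (a * b) = Φ b * Φ a := by
    have heq : (LinearMap.mul Aq T2).compr₂ Φ
        = ((LinearMap.mul Aq T2).compl₁₂ Φ Φ).flip := by
      apply b2.ext
      intro pr
      apply b2.ext
      intro pr'
      simpa using hkey pr pr'
    intro a b
    have h := LinearMap.congr_fun (LinearMap.congr_fun heq a) b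
    simpa using h
  have hreprΦ : ∀ y : T2, b2.repr (Φ y)
      = Finsupp.mapDomain (fun pr : FreeMonoid I × FreeMonoid I =>
          (revW pr.2, revW pr.1)) (b2.repr y) := by
    have heq : (b2.repr.toLinearMap.comp Φ)
        = (Finsupp.lmapDomain Aq Aq (fun pr : FreeMonoid I × FreeMonoid I =>
            (revW pr.2, revW pr.1))).comp b2.repr.toLinearMap := by
      apply b2.ext
      intro pr
      simp [hΦb, Finsupp.mapDomain_single]
    intro y
    have h := LinearMap.congr_fun heq y
    simpa using h
  have hth : ∀ i : I, (ofW (FreeMonoid.of i) : FF I) = th i := fun _ => rfl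
  -- part 1
  have part1w : ∀ w : FreeMonoid I, r (ofW (revW w)) = Φ (r (ofW w)) := by
    intro w
    induction w using FreeMonoid.recOn with
    | one => rw [revW_one, ofW_one, map_one r, hΦ1]
    | of_mul i v ihv =>
        rw [revW_mul, revW_of, ofW_mul, ofW_mul, map_mul, map_mul, hΦmul, ihv]
        congr 1
        rw [hth, hr, map_add, hΦb, hΦb]
        simp only [revW_one, revW_of]
        exact add_comm _ _
  have part1 : ∀ x : FF I, r (σ x) = Φ (r x) := by
    intro x
    induction x using MonoidAlgebra.induction_on with
    | of w =>
        rw [show MonoidAlgebra.of Aq (FreeMonoid I) w = ofW w from rfl, hσ, part1w]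
    | add f g hf hg => rw [map_add, map_add, map_add, map_add, hf, hg]
    | smul c f hf => rw [map_smul, map_smul, map_smul, map_smul, hf]
  -- basic facts about the form
  have hrepr1 : b2.repr (r 1)
      = Finsupp.single ((1 : FreeMonoid I), (1 : FreeMonoid I)) 1 := by
    rw [map_one, ← hone, b2.repr_self]
  have hreprth : ∀ i : I, b2.repr (r (th i))
      = Finsupp.single (FreeMonoid.of i, (1 : FreeMonoid I)) 1
        + Finsupp.single ((1 : FreeMonoid I), FreeMonoid.of i) 1 := by
    intro i
    rw [hr, map_add, b2.repr_self, b2.repr_self]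
  have hBth1 : ∀ i : I, B (th i) 1 = 0 := by
    intro i
    have h := hB.mul_right (th i) 1 1
    rw [one_mul, hreprth i,
      Finsupp.sum_add_index' (fun pr => by simp) (fun pr c c' => by ring),
      Finsupp.sum_single_index (by simp), Finsupp.sum_single_index (by simp)] at h
    simp only [ofW_one, hth, hB.one_one, one_mul, mul_one] at h
    linear_combination -h
  have hB1th : ∀ j : I, B 1 (th j) = 0 := by
    intro j
    have h := hB.mul_left 1 1 (th j)
    rw [one_mul, hreprth j,
      Finsupp.sum_add_index' (fun pr => by simp) (fun pr c c' => by ring),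
      Finsupp.sum_single_index (by simp), Finsupp.sum_single_index (by simp)] at h
    simp only [ofW_one, hth, hB.one_one, one_mul, mul_one] at h
    linear_combination -h
  have hBX1 : ∀ w : FreeMonoid I, B (ofW w) 1 = if w = 1 then 1 else 0 := by
    intro w
    induction w using FreeMonoid.recOn with
    | one => rw [ofW_one, if_pos rfl]; exact hB.one_one
    | of_mul i v ihv =>
        rw [ofW_mul, hth, if_neg (of_mul_ne_one i v)]
        have h := hB.mul_left (th i) (ofW v) 1
        rw [hrepr1, Finsupp.sum_single_index (by simp)] at h
        rw [h]
        simp only [ofW_one, one_mul]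
        rw [hBth1 i, zero_mul]
  have hBcons : ∀ (i : I) (v : FreeMonoid I) (j : I),
      B (ofW (FreeMonoid.of i * v)) (th j) = B (th i) (th j) * B (ofW v) 1 := by
    intro i v j
    rw [ofW_mul, hth]
    have h := hB.mul_left (th i) (ofW v) (th j)
    rw [hreprth j,
      Finsupp.sum_add_index' (fun pr => by simp) (fun pr c c' => by ring),
      Finsupp.sum_single_index (by simp), Finsupp.sum_single_index (by simp)] at h
    rw [h]
    simp only [ofW_one, hth, one_mul]
    rw [hBth1 i, zero_mul, add_zero]
  have hlong : ∀ (l : List I) (j : I), 2 ≤ l.length →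
      B (ofW (FreeMonoid.ofList l)) (th j) = 0 := by
    intro l j hl
    match l with
    | [] => simp at hl
    | [i] => simp at hl
    | i :: i' :: v =>
        have h1 : FreeMonoid.ofList (i :: i' :: v)
            = FreeMonoid.of i * FreeMonoid.ofList (i' :: v) := rfl
        rw [h1, hBcons, hBX1]
        have h2 : FreeMonoid.ofList (i' :: v) ≠ 1 := by
          intro h
          have := congrArg FreeMonoid.toList h
          simp [FreeMonoid.toList_ofList, FreeMonoid.toList_one] at this
        rw [if_neg h2, mul_zero]
  have hBwthj : ∀ (w : FreeMonoid I) (j : I),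
      B (ofW (revW w)) (th j) = B (ofW w) (th j) := by
    intro w j
    rcases hw : FreeMonoid.toList w with - | ⟨i, - | ⟨i', v⟩⟩
    · have h1 : w = 1 := by
        rw [← FreeMonoid.ofList_toList w, hw]; rfl
      rw [h1, revW_one]
    · have h1 : revW w = w := by
        unfold revW
        rw [hw, List.reverse_singleton, ← hw, FreeMonoid.ofList_toList]
      rw [h1]
    · have h1 : B (ofW w) (th j) = 0 := by
        conv_lhs => rw [← FreeMonoid.ofList_toList w, hw]
        exact hlong _ j (by simp)
      have h2 : B (ofW (revW w)) (th j) = 0 := by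
        unfold revW
        rw [hw]
        exact hlong _ j (by simp)
      rw [h1, h2]
  have hB_x1 : ∀ x : FF I, B (σ x) 1 = B x 1 := by
    intro x
    induction x using MonoidAlgebra.induction_on with
    | of w =>
        rw [show MonoidAlgebra.of Aq (FreeMonoid I) w = ofW w from rfl, hσ,
          hBX1, hBX1]
        simp [revW_eq_one_iff]
    | add f g hf hg =>
        rw [LinearMap.map_add σ, LinearMap.map_add B, LinearMap.map_add B,
          LinearMap.add_apply, LinearMap.add_apply, hf, hg]
    | smul c f hf =>
        rw [LinearMap.map_smul σ, LinearMap.map_smul B, LinearMap.map_smul B,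
          LinearMap.smul_apply, LinearMap.smul_apply, hf]
  -- main induction for part 2
  have main : ∀ (w' : FreeMonoid I) (x : FF I),
      B (σ x) (ofW (revW w')) = B x (ofW w') := by
    intro w'
    induction w' using FreeMonoid.recOn with
    | one =>
        intro x
        rw [revW_one, ofW_one]
        exact hB_x1 x
    | of_mul j v ihv =>
        intro x
        have hR : B x (ofW (FreeMonoid.of j * v))
            = (b2.repr (r x)).sum fun pr c =>
                c * B (ofW pr.1) (th j) * B (ofW pr.2) (ofW v) := by
          rw [ofW_mul, hth]
          exact hB.mul_right x (th j) (ofW v)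
        have hL : B (σ x) (ofW (revW (FreeMonoid.of j * v)))
            = (b2.repr (r (σ x))).sum fun pr c =>
                c * B (ofW pr.1) (ofW (revW v)) * B (ofW pr.2) (th j) := by
          rw [revW_mul, revW_of, ofW_mul, hth]
          exact hB.mul_right (σ x) (ofW (revW v)) (th j)
        rw [hL, hR, part1 x, hreprΦ (r x),
          Finsupp.sum_mapDomain_index (fun pr => by simp) (fun pr c c' => by ring)]
        apply Finsupp.sum_congr
        intro pr _
        simp only
        have h1 : B (ofW (revW pr.2)) (ofW (revW v)) = B (ofW pr.2) (ofW v) := by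
          rw [← hσ pr.2]
          exact ihv (ofW pr.2)
        rw [h1, hBwthj pr.1 j]
        ring
  refine ⟨part1, ?_⟩
  intro x x'
  induction x' using MonoidAlgebra.induction_on with
  | of w =>
      rw [show MonoidAlgebra.of Aq (FreeMonoid I) w = ofW w from rfl, hσ]
      exact main w x
  | add f g hf hg =>
      rw [LinearMap.map_add σ, LinearMap.map_add (B (σ x)), LinearMap.map_add (B x),
        hf, hg]
  | smul c f hf =>
      rw [LinearMap.map_smul σ, LinearMap.map_smul (B (σ x)), LinearMap.map_smul (B x),
        hf]
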